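/- Let G₁, G₂ ⊆ [0,1]² be disjoint closed convex sets, c₁, c₂ ∈ ℝ, and f = c₁·1_{G₁} + c₂·1_{G₂}. Define f_a(x,y) = ∫₀¹∫₀¹ β_α(t,x) β_{α′}(s,y) f(t,s) dt ds for a = (α, α′) ∈ ℕ₊ × ℕ₊. Then f_a converges to f in L¹([0,1]²) as α, α′ → ∞; that is, ∫_{[0,1]²} |f_a(x,y) − f(x,y)| dx dy → 0. -/

import Mathlib

open MeasureTheory Filter

/-- The Beta function `B(u,v) = Γ(u)Γ(v)/Γ(u+v)`. -/
noncomputable def betaFn (u v : ℝ) : ℝ :=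
  Real.Gamma u * Real.Gamma v / Real.Gamma (u + v)

/-- The beta kernel `β_α(t,x) = t^⌊αx⌋ (1−t)^(α−⌊αx⌋) / B(⌊αx⌋+1, α−⌊αx⌋+1)`. -/
noncomputable def betaKer (α : ℕ) (x t : ℝ) : ℝ :=
  t ^ ⌊(α : ℝ) * x⌋₊ * (1 - t) ^ (α - ⌊(α : ℝ) * x⌋₊) /
    betaFn ((⌊(α : ℝ) * x⌋₊ : ℝ) + 1) (((α - ⌊(α : ℝ) * x⌋₊ : ℕ) : ℝ) + 1)

/-- Moment-recovered approximation of a function `f`: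
`f_a(x,y) = ∫₀¹∫₀¹ β_α(t,x) β_{α′}(s,y) f(t,s) dt ds`. -/
noncomputable def kerApprox (f : ℝ × ℝ → ℝ) (α α' : ℕ) (x y : ℝ) : ℝ :=
  ∫ t in (0:ℝ)..1, ∫ s in (0:ℝ)..1, betaKer α x t * betaKer α' y s * f (t, s)

open intervalIntegral

lemma J_step (m n : ℕ) :
    ((m:ℝ)+1) * ∫ t in (0:ℝ)..1, t^m*(1-t)^(n+1)
      = ((n:ℝ)+1) * ∫ t in (0:ℝ)..1, t^(m+1)*(1-t)^n := by
  have key : ∫ t in (0:ℝ)..1,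
      (((m:ℝ)+1) * (t^m*(1-t)^(n+1)) - ((n:ℝ)+1) * (t^(m+1)*(1-t)^n)) = 0 := by
    have hD : ∀ t ∈ Set.uIcc (0:ℝ) 1, HasDerivAt (fun t : ℝ => t^(m+1)*(1-t)^(n+1))
        (((m:ℝ)+1) * (t^m*(1-t)^(n+1)) - ((n:ℝ)+1) * (t^(m+1)*(1-t)^n)) t := by
      intro t _
      have h1 : HasDerivAt (fun t : ℝ => t^(m+1)) (((m:ℝ)+1)*t^m) t := by
        simpa using (hasDerivAt_pow (m+1) t)
      have h2 : HasDerivAt (fun t : ℝ => (1-t)^(n+1)) (-(((n:ℝ)+1)*(1-t)^n)) t := by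
        have := (hasDerivAt_pow (n+1) (1-t)).comp t
          ((hasDerivAt_const t (1:ℝ)).sub (hasDerivAt_id t))
        simpa [Function.comp_def] using this.neg.neg
      have : HasDerivAt (fun t : ℝ => t^(m+1)*(1-t)^(n+1)) _ t := h1.mul h2
      convert this using 1
      push_cast; ring
    have hint : IntervalIntegrable (fun t : ℝ =>
        ((m:ℝ)+1) * (t^m*(1-t)^(n+1)) - ((n:ℝ)+1) * (t^(m+1)*(1-t)^n)) volume 0 1 :=
      (Continuous.intervalIntegrable (by continuity) _ _)
    have := integral_eq_sub_of_hasDerivAt hD hint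
    simpa using this
  have i1 : IntervalIntegrable (fun t : ℝ => t^m*(1-t)^(n+1)) volume 0 1 :=
    (Continuous.intervalIntegrable (by continuity) _ _)
  have i2 : IntervalIntegrable (fun t : ℝ => t^(m+1)*(1-t)^n) volume 0 1 :=
    (Continuous.intervalIntegrable (by continuity) _ _)
  have h3 := intervalIntegral.integral_sub (i1.const_mul (((m:ℝ)+1))) (i2.const_mul (((n:ℝ)+1)))
  rw [intervalIntegral.integral_const_mul, intervalIntegral.integral_const_mul] at h3
  rw [key] at h3
  linarith [h3]

lemma J_val (n m : ℕ) : ∫ t in (0:ℝ)..1, t^m*(1-t)^n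
    = (m.factorial : ℝ) * n.factorial / (m+n+1).factorial := by
  induction n generalizing m with
  | zero =>
    simp only [pow_zero, mul_one, integral_pow]
    rw [Nat.factorial_zero, show m + 0 + 1 = m + 1 from rfl, Nat.factorial_succ]
    have : (m.factorial : ℝ) ≠ 0 := by positivity
    push_cast
    field_simp
    simp
  | succ n ih =>
    have hs := J_step m n
    have h2 := ih (m+1)
    have hm : ((m:ℝ)+1) ≠ 0 := by positivity
    have : ∫ t in (0:ℝ)..1, t^m*(1-t)^(n+1)
        = ((n:ℝ)+1) / ((m:ℝ)+1) * ((((m+1).factorial : ℝ)) * n.factorial / ((m+1)+n+1).factorial) := by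
      rw [← h2]; field_simp at hs ⊢; linarith [hs]
    rw [this]
    have e1 : ((m+1).factorial : ℝ) = ((m:ℝ)+1) * m.factorial := by
      rw [Nat.factorial_succ]; push_cast; ring
    have e2 : ((m+(n+1)+1).factorial : ℝ) = ((m:ℝ)+n+2) * (m+n+1).factorial := by
      rw [show m+(n+1)+1 = (m+n+1)+1 by ring, Nat.factorial_succ]; push_cast; ring
    have e3 : (((m+1)+n+1).factorial : ℝ) = ((m:ℝ)+n+2) * (m+n+1).factorial := by
      rw [show (m+1)+n+1 = (m+n+1)+1 by ring, Nat.factorial_succ]; push_cast; ring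
    rw [e1, e3, e2]
    have e4 : ((n+1).factorial : ℝ) = ((n:ℝ)+1) * n.factorial := by
      rw [Nat.factorial_succ]; push_cast; ring
    rw [e4]
    have : ((m+n+1).factorial : ℝ) ≠ 0 := by positivity
    field_simp


lemma betaFn_nat (m n : ℕ) : betaFn ((m:ℝ)+1) ((n:ℝ)+1)
    = (m.factorial : ℝ) * n.factorial / (m+n+1).factorial := by
  unfold betaFn
  rw [show ((m:ℝ)+1) + ((n:ℝ)+1) = ((m+n+1 : ℕ):ℝ)+1 by push_cast; ring]
  rw [show ((m:ℝ)+1) = ((m:ℕ):ℝ)+1 from rfl, Real.Gamma_nat_eq_factorial,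
    show ((n:ℝ)+1) = ((n:ℕ):ℝ)+1 from rfl, Real.Gamma_nat_eq_factorial,
    Real.Gamma_nat_eq_factorial]

lemma betaFn_nat_pos (m n : ℕ) : 0 < betaFn ((m:ℝ)+1) ((n:ℝ)+1) := by
  rw [betaFn_nat]; positivity
lemma quad_bound (a k x : ℝ) (ha : 0 ≤ a) (hk0 : 0 ≤ k) (hka : k ≤ a*x) (hak : a*x ≤ k+1)
    (hkA : k ≤ a) (hx0 : 0 ≤ x) (hx1 : x ≤ 1) :
    (k+1)*(k+2)/((a+2)*(a+3)) - 2*x*(k+1)/(a+2) + x^2 ≤ 2/(a+1) := by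
  have h1 : (0:ℝ) < a+1 := by linarith
  have h2 : (0:ℝ) < a+2 := by linarith
  have h3 : (0:ℝ) < a+3 := by linarith
  have e : (k+1)*(k+2)/((a+2)*(a+3)) - 2*x*(k+1)/(a+2) + x^2
      = (k+1)*(a+1-k)/((a+2)^2*(a+3)) + ((k+1)-(a+2)*x)^2/(a+2)^2 := by
    field_simp; ring
  have hb : ((k+1)-(a+2)*x)^2 ≤ 4 := by nlinarith
  have hv : (k+1)*(a+1-k) ≤ (a+2)^2/4 := by nlinarith [sq_nonneg (a-2*k)]
  have t1 : (k+1)*(a+1-k)/((a+2)^2*(a+3)) ≤ 1/(4*(a+3)) := by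
    rw [div_le_div_iff₀ (by positivity) (by positivity)]; nlinarith
  have t2 : ((k+1)-(a+2)*x)^2/(a+2)^2 ≤ 4/(a+2)^2 :=
    div_le_div_of_nonneg_right ?_ (by positivity) |>.trans_eq rfl
  case _ =>
    rw [e]
    have final : 1/(4*(a+3)) + 4/(a+2)^2 ≤ 2/(a+1) := by
      rw [div_add_div _ _ (by positivity) (by positivity),
        div_le_div_iff₀ (by positivity) (by positivity)]
      nlinarith [mul_nonneg ha ha, mul_nonneg (mul_nonneg ha ha) ha]
    linarith
  case _ => exact hb


lemma betaKer_eq (α : ℕ) (x : ℝ) : betaKer α x = fun t =>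
    t ^ ⌊(α : ℝ) * x⌋₊ * (1 - t) ^ (α - ⌊(α : ℝ) * x⌋₊) /
      betaFn ((⌊(α : ℝ) * x⌋₊ : ℝ) + 1) (((α - ⌊(α : ℝ) * x⌋₊ : ℕ) : ℝ) + 1) := rfl

lemma betaKer_continuous (α : ℕ) (x : ℝ) : Continuous (betaKer α x) := by
  rw [betaKer_eq]; fun_prop

lemma betaKer_nonneg (α : ℕ) (x : ℝ) {t : ℝ} (ht : t ∈ Set.Icc (0:ℝ) 1) :
    0 ≤ betaKer α x t := by
  have hb := betaFn_nat_pos ⌊(α : ℝ) * x⌋₊ (α - ⌊(α : ℝ) * x⌋₊)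
  rw [betaKer_eq]
  have h1 : 0 ≤ t := ht.1
  have h2 : 0 ≤ 1 - t := by linarith [ht.2]
  positivity

lemma betaKer_integral (α : ℕ) (x : ℝ) :
    ∫ t in (0:ℝ)..1, betaKer α x t = 1 := by
  set k := ⌊(α : ℝ) * x⌋₊
  set n := α - k
  have hb := betaFn_nat_pos k n
  rw [betaKer_eq]
  simp only
  rw [intervalIntegral.integral_div, J_val, betaFn_nat]
  exact div_self (by positivity)

lemma betaKer_moment (α : ℕ) {x : ℝ} (hx : x ∈ Set.Icc (0:ℝ) 1) :
    ∫ t in (0:ℝ)..1, betaKer α x t * (t - x)^2 ≤ 2/(α+1) := by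
  set k := ⌊(α : ℝ) * x⌋₊ with hkdef
  set n := α - k with hndef
  have hb := betaFn_nat_pos k n
  set b := betaFn ((k : ℝ) + 1) ((n : ℕ) + 1) with hbdef
  have hka : (k : ℝ) ≤ (α : ℝ) * x := Nat.floor_le (mul_nonneg (Nat.cast_nonneg α) hx.1)
  have hak : (α : ℝ) * x ≤ k + 1 := le_of_lt (Nat.lt_floor_add_one _)
  have hkA : k ≤ α := by
    have h1 : (α:ℝ) * x ≤ (α:ℝ) := mul_le_of_le_one_right (Nat.cast_nonneg α) hx.2
    calc k ≤ ⌊(α:ℝ)⌋₊ := Nat.floor_le_floor h1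
    _ = α := Nat.floor_natCast α
  have hnc : (n : ℝ) = (α : ℝ) - k := by
    rw [hndef]; push_cast [Nat.cast_sub hkA]; ring
  -- expand the integrand
  have hexp : ∀ t : ℝ, betaKer α x t * (t - x)^2
      = (t^(k+2)*(1-t)^n)/b - 2*x*((t^(k+1)*(1-t)^n)/b) + x^2*((t^k*(1-t)^n)/b) := by
    intro t
    have h : betaKer α x t = t^k*(1-t)^n/b := rfl
    rw [h]
    field_simp
    ring
  have i0 : IntervalIntegrable (fun t:ℝ => (t^(k+2)*(1-t)^n)/b) volume 0 1 :=
    (Continuous.intervalIntegrable (by fun_prop) _ _)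
  have i1 : IntervalIntegrable (fun t:ℝ => (t^(k+1)*(1-t)^n)/b) volume 0 1 :=
    (Continuous.intervalIntegrable (by fun_prop) _ _)
  have i2 : IntervalIntegrable (fun t:ℝ => (t^k*(1-t)^n)/b) volume 0 1 :=
    (Continuous.intervalIntegrable (by fun_prop) _ _)
  rw [intervalIntegral.integral_congr (fun t _ => hexp t)]
  rw [intervalIntegral.integral_add ((i0.sub (i1.const_mul _))) (i2.const_mul _),
    intervalIntegral.integral_sub i0 (i1.const_mul _),
    intervalIntegral.integral_const_mul, intervalIntegral.integral_const_mul,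
    intervalIntegral.integral_div, intervalIntegral.integral_div,
    intervalIntegral.integral_div, J_val, J_val, J_val]
  -- now pure arithmetic with factorials
  have hbv : b = (k.factorial : ℝ) * n.factorial / (k+n+1).factorial := betaFn_nat k n
  have e1 : ((k+1).factorial : ℝ) = ((k:ℝ)+1) * k.factorial := by
    rw [Nat.factorial_succ]; push_cast; ring
  have e2 : ((k+2).factorial : ℝ) = ((k:ℝ)+2)*((k:ℝ)+1) * k.factorial := by
    rw [show k+2 = (k+1)+1 from rfl, Nat.factorial_succ, Nat.cast_mul, e1]; push_cast; ring
  have e3 : ((k+1+n+1).factorial : ℝ) = ((k:ℝ)+n+2) * (k+n+1).factorial := by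
    rw [show k+1+n+1 = (k+n+1)+1 by ring, Nat.factorial_succ]; push_cast; ring
  have e4 : ((k+2+n+1).factorial : ℝ) = ((k:ℝ)+n+3)*((k:ℝ)+n+2) * (k+n+1).factorial := by
    rw [show k+2+n+1 = ((k+n+1)+1)+1 by ring, Nat.factorial_succ, Nat.factorial_succ]
    push_cast; ring
  have hkf : (0:ℝ) < k.factorial := by positivity
  have hnf : (0:ℝ) < n.factorial := by positivity
  have hknf : (0:ℝ) < (k+n+1).factorial := by positivity
  have hAn : (k:ℝ) + n = α := by rw [hnc]; ring
  have val : (((k+2).factorial:ℝ) * n.factorial / (k+2+n+1).factorial) / b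
        - 2*x*((((k+1).factorial:ℝ) * n.factorial / (k+1+n+1).factorial) / b)
        + x^2*((((k).factorial:ℝ) * n.factorial / (k+n+1).factorial) / b)
      = ((k:ℝ)+1)*((k:ℝ)+2)/(((α:ℝ)+2)*((α:ℝ)+3)) - 2*x*((k:ℝ)+1)/((α:ℝ)+2) + x^2 := by
    rw [hbv, e1, e2, e3, e4, ← hAn]
    have h2 : (0:ℝ) < (k:ℝ)+n+2 := by positivity
    have h3 : (0:ℝ) < (k:ℝ)+n+3 := by positivity
    field_simp
  rw [val]
  exact quad_bound α k x (by positivity) (by positivity) hka hak (by exact_mod_cast hkA) hx.1 hx.2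


lemma betaKer_bound (α : ℕ) (x : ℝ) :
    ∃ C : ℝ, 0 ≤ C ∧ ∀ t ∈ Set.Icc (0:ℝ) 1, |betaKer α x t| ≤ C := by
  set k := ⌊(α : ℝ) * x⌋₊
  set n := α - k
  have hb := betaFn_nat_pos k n
  refine ⟨(betaFn ((k:ℝ)+1) ((n:ℕ)+1))⁻¹, by positivity, fun t ht => ?_⟩
  have h1 : 0 ≤ t := ht.1
  have h2 : 0 ≤ 1 - t := by linarith [ht.2]
  have hnum : t ^ k * (1-t) ^ n ≤ 1 := by
    calc t ^ k * (1-t) ^ n ≤ 1 * 1 :=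
      mul_le_mul (pow_le_one₀ h1 ht.2) (pow_le_one₀ h2 (by linarith)) (by positivity) zero_le_one
    _ = 1 := mul_one 1
  rw [abs_of_nonneg (betaKer_nonneg α x ht), betaKer_eq]
  simp only [div_eq_mul_inv]
  calc t ^ k * (1-t) ^ n * (betaFn ((k:ℝ)+1) ((n:ℕ)+1))⁻¹
      ≤ 1 * (betaFn ((k:ℝ)+1) ((n:ℕ)+1))⁻¹ := by
        apply mul_le_mul_of_nonneg_right hnum (by positivity)
  _ = _ := one_mul _

def Q01 : Set (ℝ × ℝ) := Set.Ioc (0:ℝ) 1 ×ˢ Set.Ioc (0:ℝ) 1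

lemma Q01_def : Q01 = Set.Ioc (0:ℝ) 1 ×ˢ Set.Ioc (0:ℝ) 1 := rfl

lemma measurableSet_Q01 : MeasurableSet Q01 := (measurableSet_Ioc).prod measurableSet_Ioc

lemma Q01_vol : volume Q01 < ⊤ :=
  lt_of_le_of_lt (measure_mono (Set.prod_mono Set.Ioc_subset_Icc_self Set.Ioc_subset_Icc_self))
    (IsCompact.measure_lt_top (isCompact_Icc.prod isCompact_Icc))

lemma integrableOn_ker_mul (α α' : ℕ) (x y : ℝ) (h : ℝ × ℝ → ℝ) (hm : Measurable h)
    (M : ℝ) (hM : ∀ p ∈ Set.Icc (0:ℝ) 1 ×ˢ Set.Icc (0:ℝ) 1, |h p| ≤ M) :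
    IntegrableOn (fun p : ℝ × ℝ => betaKer α x p.1 * betaKer α' y p.2 * h p) Q01 volume := by
  obtain ⟨C₁, hC₁0, hC₁⟩ := betaKer_bound α x
  obtain ⟨C₂, hC₂0, hC₂⟩ := betaKer_bound α' y
  have hmeas : AEStronglyMeasurable (fun p : ℝ × ℝ =>
      betaKer α x p.1 * betaKer α' y p.2 * h p) (volume.restrict Q01) := by
    apply Measurable.aestronglyMeasurable
    exact (((betaKer_continuous α x).measurable.comp measurable_fst).mul
      ((betaKer_continuous α' y).measurable.comp measurable_snd)).mul hm
  refine Integrable.mono' ((integrableOn_const_iff (C := C₁ * C₂ * M)).2 (Or.inr Q01_vol)) hmeas ?_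
  rw [ae_restrict_iff' measurableSet_Q01]
  filter_upwards with p hp
  rw [Q01_def, Set.mem_prod] at hp
  have hp1 : p.1 ∈ Set.Icc (0:ℝ) 1 := Set.Ioc_subset_Icc_self hp.1
  have hp2 : p.2 ∈ Set.Icc (0:ℝ) 1 := Set.Ioc_subset_Icc_self hp.2
  have hMnn : 0 ≤ M := le_trans (abs_nonneg _) (hM p ⟨hp1, hp2⟩)
  calc ‖betaKer α x p.1 * betaKer α' y p.2 * h p‖
      = |betaKer α x p.1| * |betaKer α' y p.2| * |h p| := by
        rw [Real.norm_eq_abs, abs_mul, abs_mul]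
  _ ≤ C₁ * C₂ * M := by
      apply mul_le_mul (mul_le_mul (hC₁ _ hp1) (hC₂ _ hp2) (abs_nonneg _) hC₁0)
        (hM p ⟨hp1, hp2⟩) (abs_nonneg _) (by positivity)

lemma iter_eq_prod_integral (α α' : ℕ) (x y : ℝ) (h : ℝ × ℝ → ℝ) (hm : Measurable h)
    (M : ℝ) (hM : ∀ p ∈ Set.Icc (0:ℝ) 1 ×ˢ Set.Icc (0:ℝ) 1, |h p| ≤ M) :
    (∫ t in (0:ℝ)..1, ∫ s in (0:ℝ)..1, betaKer α x t * betaKer α' y s * h (t, s))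
      = ∫ p in Q01, betaKer α x p.1 * betaKer α' y p.2 * h p := by
  have hint := integrableOn_ker_mul α α' x y h hm M hM
  rw [intervalIntegral.integral_of_le zero_le_one]
  have : ∀ t : ℝ, (∫ s in (0:ℝ)..1, betaKer α x t * betaKer α' y s * h (t, s))
      = ∫ s in Set.Ioc (0:ℝ) 1, betaKer α x t * betaKer α' y s * h (t, s) := fun t =>
    intervalIntegral.integral_of_le zero_le_one
  simp_rw [this]
  have hint' : Integrable (Function.uncurry fun t s =>
      betaKer α x t * betaKer α' y s * h (t, s))
      ((volume.restrict (Set.Ioc (0:ℝ) 1)).prod (volume.restrict (Set.Ioc (0:ℝ) 1))) := by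
    rw [Measure.prod_restrict]
    rw [← Measure.volume_eq_prod]
    exact hint
  have heq := MeasureTheory.integral_integral hint'
  rw [heq, Measure.prod_restrict, ← Measure.volume_eq_prod]
  rw [Q01_def]

lemma kerApprox_eq_prod (f : ℝ × ℝ → ℝ) (hm : Measurable f) (M : ℝ)
    (hM : ∀ p ∈ Set.Icc (0:ℝ) 1 ×ˢ Set.Icc (0:ℝ) 1, |f p| ≤ M) (α α' : ℕ) (x y : ℝ) :
    kerApprox f α α' x y = ∫ p in Q01, betaKer α x p.1 * betaKer α' y p.2 * f p :=
  iter_eq_prod_integral α α' x y f hm M hM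

lemma prod_ker_one (α α' : ℕ) (x y : ℝ) :
    ∫ p in Q01, betaKer α x p.1 * betaKer α' y p.2 = 1 := by
  have h := iter_eq_prod_integral α α' x y (fun _ => 1) measurable_const 1
    (fun p _ => by simp)
  simp only [mul_one] at h
  rw [← h]
  have hin : ∀ t : ℝ, (∫ s in (0:ℝ)..1, betaKer α x t * betaKer α' y s)
      = betaKer α x t := by
    intro t
    rw [intervalIntegral.integral_const_mul, betaKer_integral, mul_one]
  simp_rw [hin]
  exact betaKer_integral α x

lemma prod_ker_sq_fst (α α' : ℕ) (x y : ℝ) (hx : x ∈ Set.Icc (0:ℝ) 1) :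
    ∫ p in Q01, betaKer α x p.1 * betaKer α' y p.2 * (p.1 - x)^2 ≤ 2/(α+1) := by
  have hb : ∀ p : ℝ × ℝ, p ∈ Set.Icc (0:ℝ) 1 ×ˢ Set.Icc (0:ℝ) 1 →
      |(p.1 - x)^2| ≤ 1 := by
    intro p hp
    rw [abs_of_nonneg (sq_nonneg _)]
    have h1 := hp.1.1; have h2 := hp.1.2; have h3 := hx.1; have h4 := hx.2
    nlinarith
  have h := iter_eq_prod_integral α α' x y (fun p => (p.1 - x)^2)
    (by fun_prop) 1 hb
  rw [← h]
  have hin : ∀ t : ℝ, (∫ s in (0:ℝ)..1, betaKer α x t * betaKer α' y s * (t - x)^2)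
      = betaKer α x t * (t - x)^2 := by
    intro t
    have e : (fun s => betaKer α x t * betaKer α' y s * (t - x)^2)
        = fun s => (betaKer α x t * (t - x)^2) * betaKer α' y s := by funext s; ring
    rw [e, intervalIntegral.integral_const_mul, betaKer_integral, mul_one]
  simp_rw [hin]
  exact betaKer_moment α hx

lemma prod_ker_sq_snd (α α' : ℕ) (x y : ℝ) (hy : y ∈ Set.Icc (0:ℝ) 1) :
    ∫ p in Q01, betaKer α x p.1 * betaKer α' y p.2 * (p.2 - y)^2 ≤ 2/(α'+1) := by
  have hb : ∀ p : ℝ × ℝ, p ∈ Set.Icc (0:ℝ) 1 ×ˢ Set.Icc (0:ℝ) 1 →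
      |(p.2 - y)^2| ≤ 1 := by
    intro p hp
    rw [abs_of_nonneg (sq_nonneg _)]
    have h1 := hp.2.1; have h2 := hp.2.2; have h3 := hy.1; have h4 := hy.2
    nlinarith
  have h := iter_eq_prod_integral α α' x y (fun p => (p.2 - y)^2)
    (by fun_prop) 1 hb
  rw [← h]
  have hin : ∀ t : ℝ, (∫ s in (0:ℝ)..1, betaKer α x t * betaKer α' y s * (s - y)^2)
      = betaKer α x t * ∫ s in (0:ℝ)..1, betaKer α' y s * (s - y)^2 := by
    intro t
    have e : (fun s => betaKer α x t * betaKer α' y s * (s - y)^2)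
        = fun s => betaKer α x t * (betaKer α' y s * (s - y)^2) := by funext s; ring
    rw [e, intervalIntegral.integral_const_mul]
  simp_rw [hin]
  rw [intervalIntegral.integral_mul_const, betaKer_integral, one_mul]
  exact betaKer_moment α' hy

lemma kerApprox_est (f : ℝ × ℝ → ℝ) (hm : Measurable f) (M : ℝ)
    (hM : ∀ p ∈ Set.Icc (0:ℝ) 1 ×ˢ Set.Icc (0:ℝ) 1, |f p| ≤ M)
    (α α' : ℕ) {x y : ℝ} (hx : x ∈ Set.Icc (0:ℝ) 1) (hy : y ∈ Set.Icc (0:ℝ) 1)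
    {c D : ℝ} (hcM : |c| ≤ M) (hD : 0 ≤ D)
    (hdom : ∀ p ∈ Set.Icc (0:ℝ) 1 ×ˢ Set.Icc (0:ℝ) 1,
      |f p - c| ≤ D * ((p.1 - x)^2 + (p.2 - y)^2)) :
    |kerApprox f α α' x y - c| ≤ D * (2/(α+1)) + D * (2/(α'+1)) := by
  have I1 := integrableOn_ker_mul α α' x y f hm M hM
  have I2 := integrableOn_ker_mul α α' x y (fun _ => c) measurable_const M (fun p _ => hcM)
  have I3 := integrableOn_ker_mul α α' x y (fun p => (p.1 - x)^2) (by fun_prop) 4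
    (fun p hp => by
      rw [abs_of_nonneg (sq_nonneg _)]
      have h1 := hp.1.1; have h2 := hp.1.2; have h3 := hx.1; have h4 := hx.2; nlinarith)
  have I4 := integrableOn_ker_mul α α' x y (fun p => (p.2 - y)^2) (by fun_prop) 4
    (fun p hp => by
      rw [abs_of_nonneg (sq_nonneg _)]
      have h1 := hp.2.1; have h2 := hp.2.2; have h3 := hy.1; have h4 := hy.2; nlinarith)
  have Ic : ∫ p in Q01, betaKer α x p.1 * betaKer α' y p.2 * c = c := by
    rw [MeasureTheory.integral_mul_const, prod_ker_one, one_mul]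
  have A : (∫ p in Q01, betaKer α x p.1 * betaKer α' y p.2 * (f p - c))
      = kerApprox f α α' x y - c := by
    calc (∫ p in Q01, betaKer α x p.1 * betaKer α' y p.2 * (f p - c))
        = (∫ p in Q01, betaKer α x p.1 * betaKer α' y p.2 * f p)
          - ∫ p in Q01, betaKer α x p.1 * betaKer α' y p.2 * c := by
          rw [← MeasureTheory.integral_sub I1 I2]; congr 1; funext p; ring
    _ = kerApprox f α α' x y - c := by rw [Ic, kerApprox_eq_prod f hm M hM α α' x y]
  rw [← A, ← Real.norm_eq_abs]
  have hg : IntegrableOn (fun p : ℝ × ℝ =>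
      betaKer α x p.1 * betaKer α' y p.2 * (D * ((p.1 - x)^2 + (p.2 - y)^2))) Q01 volume := by
    apply integrableOn_ker_mul α α' x y _ (by fun_prop) (D * 8)
    intro p hp
    have h1 := hp.1.1; have h2 := hp.1.2; have h3 := hx.1; have h4 := hx.2
    have h5 := hp.2.1; have h6 := hp.2.2; have h7 := hy.1; have h8 := hy.2
    rw [abs_of_nonneg (by positivity)]
    have h9 : (p.1 - x)^2 + (p.2 - y)^2 ≤ 8 := by nlinarith
    exact mul_le_mul_of_nonneg_left h9 hD
  refine le_trans (MeasureTheory.norm_integral_le_of_norm_le hg ?_) ?_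
  case _ =>
    rw [ae_restrict_iff' measurableSet_Q01]
    filter_upwards with p hp
    rw [Q01_def, Set.mem_prod] at hp
    have hp1 : p.1 ∈ Set.Icc (0:ℝ) 1 := Set.Ioc_subset_Icc_self hp.1
    have hp2 : p.2 ∈ Set.Icc (0:ℝ) 1 := Set.Ioc_subset_Icc_self hp.2
    have hK : 0 ≤ betaKer α x p.1 * betaKer α' y p.2 :=
      mul_nonneg (betaKer_nonneg α x hp1) (betaKer_nonneg α' y hp2)
    rw [Real.norm_eq_abs, abs_mul, abs_of_nonneg hK]
    exact mul_le_mul_of_nonneg_left (hdom p ⟨hp1, hp2⟩) hK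
  case _ =>
    have e : (fun p : ℝ × ℝ => betaKer α x p.1 * betaKer α' y p.2 * (D * ((p.1 - x)^2 + (p.2 - y)^2)))
        = fun p : ℝ × ℝ => D * (betaKer α x p.1 * betaKer α' y p.2 * (p.1 - x)^2)
          + D * (betaKer α x p.1 * betaKer α' y p.2 * (p.2 - y)^2) := by
      funext p; ring
    rw [e, MeasureTheory.integral_add ((I3.const_mul D)) ((I4.const_mul D)),
      MeasureTheory.integral_const_mul, MeasureTheory.integral_const_mul]
    have := prod_ker_sq_fst α α' x y hx
    have := prod_ker_sq_snd α α' x y hy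
    gcongr

lemma kerApprox_bound (f : ℝ × ℝ → ℝ) (hm : Measurable f) (M : ℝ) (hM0 : 0 ≤ M)
    (hM : ∀ p ∈ Set.Icc (0:ℝ) 1 ×ˢ Set.Icc (0:ℝ) 1, |f p| ≤ M)
    (α α' : ℕ) {x y : ℝ} (hx : x ∈ Set.Icc (0:ℝ) 1) (hy : y ∈ Set.Icc (0:ℝ) 1) :
    |kerApprox f α α' x y| ≤ M := by
  rw [kerApprox_eq_prod f hm M hM α α' x y, ← Real.norm_eq_abs]
  have hg : IntegrableOn (fun p : ℝ × ℝ =>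
      betaKer α x p.1 * betaKer α' y p.2 * M) Q01 volume :=
    integrableOn_ker_mul α α' x y (fun _ => M) measurable_const M
      (fun p _ => by rw [abs_of_nonneg hM0])
  refine le_trans (MeasureTheory.norm_integral_le_of_norm_le hg ?_) ?_
  case _ =>
    rw [ae_restrict_iff' measurableSet_Q01]
    filter_upwards with p hp
    rw [Q01_def, Set.mem_prod] at hp
    have hp1 : p.1 ∈ Set.Icc (0:ℝ) 1 := Set.Ioc_subset_Icc_self hp.1
    have hp2 : p.2 ∈ Set.Icc (0:ℝ) 1 := Set.Ioc_subset_Icc_self hp.2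
    have hK : 0 ≤ betaKer α x p.1 * betaKer α' y p.2 :=
      mul_nonneg (betaKer_nonneg α x hp1) (betaKer_nonneg α' y hp2)
    rw [Real.norm_eq_abs, abs_mul, abs_of_nonneg hK]
    exact mul_le_mul_of_nonneg_left (hM p ⟨hp1, hp2⟩) hK
  case _ =>
    rw [MeasureTheory.integral_mul_const, prod_ker_one, one_mul]

lemma kerApprox_measurable (f : ℝ × ℝ → ℝ) (α α' : ℕ) :
    Measurable (fun p : ℝ × ℝ => kerApprox f α α' p.1 p.2) := by
  have heq : (fun p : ℝ × ℝ => kerApprox f α α' p.1 p.2)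
      = (fun q : ℕ × ℕ => ∫ t in (0:ℝ)..1, ∫ s in (0:ℝ)..1,
          (t ^ q.1 * (1 - t) ^ (α - q.1) / betaFn ((q.1 : ℝ) + 1) (((α - q.1 : ℕ) : ℝ) + 1))
          * (s ^ q.2 * (1 - s) ^ (α' - q.2) / betaFn ((q.2 : ℝ) + 1) (((α' - q.2 : ℕ) : ℝ) + 1))
          * f (t, s))
        ∘ (fun p : ℝ × ℝ => (⌊(α : ℝ) * p.1⌋₊, ⌊(α' : ℝ) * p.2⌋₊)) := rfl
  rw [heq]
  exact (measurable_of_countable _).comp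
    ((Nat.measurable_floor.comp (measurable_const.mul measurable_fst)).prodMk
      (Nat.measurable_floor.comp (measurable_const.mul measurable_snd)))

lemma loc_const {G₁ G₂ : Set (ℝ × ℝ)} (hG₁cl : IsClosed G₁) (hG₂cl : IsClosed G₂)
    (c₁ c₂ : ℝ) (f : ℝ × ℝ → ℝ)
    (hf : f = fun p => c₁ * Set.indicator G₁ (fun _ => (1:ℝ)) p +
      c₂ * Set.indicator G₂ (fun _ => (1:ℝ)) p)
    {p : ℝ × ℝ} (hp : p ∉ frontier G₁ ∪ frontier G₂) :
    ∃ δ > (0:ℝ), ∀ q, dist q p < δ → f q = f p := by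
  have key : ∀ G : Set (ℝ × ℝ), IsClosed G → p ∉ frontier G →
      ∃ U : Set (ℝ × ℝ), IsOpen U ∧ p ∈ U ∧ ∀ q ∈ U,
        Set.indicator G (fun _ => (1:ℝ)) q = Set.indicator G (fun _ => (1:ℝ)) p := by
    intro G hGcl hpf
    by_cases hpG : p ∈ G
    · have hint : p ∈ interior G := by
        by_contra hni
        exact hpf ⟨subset_closure hpG, hni⟩
      exact ⟨interior G, isOpen_interior, hint, fun q hq => by
        rw [Set.indicator_of_mem (interior_subset hq), Set.indicator_of_mem hpG]⟩
    · exact ⟨Gᶜ, hGcl.isOpen_compl, hpG, fun q hq => by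
        rw [Set.indicator_of_notMem hq, Set.indicator_of_notMem hpG]⟩
  rw [Set.mem_union] at hp
  push_neg at hp
  obtain ⟨U₁, hU₁o, hpU₁, hU₁⟩ := key G₁ hG₁cl hp.1
  obtain ⟨U₂, hU₂o, hpU₂, hU₂⟩ := key G₂ hG₂cl hp.2
  obtain ⟨δ, hδ, hball⟩ := Metric.isOpen_iff.1 (hU₁o.inter hU₂o) p ⟨hpU₁, hpU₂⟩
  refine ⟨δ, hδ, fun q hq => ?_⟩
  have hqU := hball hq
  rw [hf]
  simp only
  rw [hU₁ q hqU.1, hU₂ q hqU.2]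

theorem stmt_9 (G₁ G₂ : Set (ℝ × ℝ))
    (hG₁cl : IsClosed G₁) (hG₁cv : Convex ℝ G₁)
    (hG₂cl : IsClosed G₂) (hG₂cv : Convex ℝ G₂)
    (hG₁sub : G₁ ⊆ Set.Icc (0:ℝ) 1 ×ˢ Set.Icc (0:ℝ) 1)
    (hG₂sub : G₂ ⊆ Set.Icc (0:ℝ) 1 ×ˢ Set.Icc (0:ℝ) 1)
    (hdisj : Disjoint G₁ G₂)
    (c₁ c₂ : ℝ) (f : ℝ × ℝ → ℝ)
    (hf : f = fun p => c₁ * Set.indicator G₁ (fun _ => (1:ℝ)) p +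
      c₂ * Set.indicator G₂ (fun _ => (1:ℝ)) p) :
    Tendsto (fun a : ℕ × ℕ =>
        ∫ p in Set.Icc (0:ℝ) 1 ×ˢ Set.Icc (0:ℝ) 1,
          |kerApprox f a.1 a.2 p.1 p.2 - f p|)
      atTop (nhds 0) := by
  set M : ℝ := |c₁| + |c₂| with hMdef
  have hM0 : 0 ≤ M := by positivity
  have hfm : Measurable f := by
    rw [hf]
    exact ((measurable_const.indicator hG₁cl.measurableSet).const_mul c₁).add
      ((measurable_const.indicator hG₂cl.measurableSet).const_mul c₂)
  have hMf : ∀ p : ℝ × ℝ, |f p| ≤ M := by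
    intro p
    rw [hf]
    simp only
    have h1 : |Set.indicator G₁ (fun _ => (1:ℝ)) p| ≤ 1 := by
      by_cases h : p ∈ G₁ <;> simp [h]
    have h2 : |Set.indicator G₂ (fun _ => (1:ℝ)) p| ≤ 1 := by
      by_cases h : p ∈ G₂ <;> simp [h]
    calc |c₁ * Set.indicator G₁ (fun _ => (1:ℝ)) p + c₂ * Set.indicator G₂ (fun _ => (1:ℝ)) p|
        ≤ |c₁| * |Set.indicator G₁ (fun _ => (1:ℝ)) p| + |c₂| * |Set.indicator G₂ (fun _ => (1:ℝ)) p| := by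
          refine (abs_add_le _ _).trans ?_
          rw [abs_mul, abs_mul]
    _ ≤ |c₁| * 1 + |c₂| * 1 :=
        add_le_add (mul_le_mul_of_nonneg_left h1 (abs_nonneg c₁))
          (mul_le_mul_of_nonneg_left h2 (abs_nonneg c₂))
    _ = M := by rw [hMdef]; ring
  have hMf' : ∀ p ∈ Set.Icc (0:ℝ) 1 ×ˢ Set.Icc (0:ℝ) 1, |f p| ≤ M := fun p _ => hMf p
  set ν := volume.restrict (Set.Icc (0:ℝ) 1 ×ˢ Set.Icc (0:ℝ) 1) with hνdef
  set E : Set (ℝ × ℝ) := frontier G₁ ∪ frontier G₂ with hEdef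
  have hEnull : volume E = 0 :=
    measure_union_null (hG₁cv.addHaar_frontier volume) (hG₂cv.addHaar_frontier volume)
  have hEmeas : MeasurableSet E :=
    (isClosed_frontier.measurableSet).union isClosed_frontier.measurableSet
  have hQmeas : MeasurableSet (Set.Icc (0:ℝ) 1 ×ˢ Set.Icc (0:ℝ) 1) :=
    measurableSet_Icc.prod measurableSet_Icc
  have hνE : ∀ᵐ p ∂ν, p ∉ E := by
    have : ν E = 0 := by
      rw [hνdef, Measure.restrict_apply hEmeas]
      exact measure_mono_null Set.inter_subset_left hEnull
    rw [ae_iff]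
    simpa [not_not] using this
  have hmem : ∀ᵐ p ∂ν, p ∈ Set.Icc (0:ℝ) 1 ×ˢ Set.Icc (0:ℝ) 1 := ae_restrict_mem hQmeas
  -- dominated convergence
  have := MeasureTheory.tendsto_integral_filter_of_dominated_convergence
    (μ := ν) (l := (atTop : Filter (ℕ × ℕ))) (F := fun (a : ℕ × ℕ) (p : ℝ × ℝ) => |kerApprox f a.1 a.2 p.1 p.2 - f p|)
    (f := fun _ : ℝ × ℝ => (0:ℝ)) (bound := fun _ => 2 * M)
    (Filter.Eventually.of_forall (fun a =>
      (((kerApprox_measurable f a.1 a.2).sub hfm).abs).aestronglyMeasurable))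
    ?_ ?_ ?_
  · simpa using this
  · -- uniform bound
    refine Filter.Eventually.of_forall (fun a => ?_)
    filter_upwards [hmem] with p hp
    have h1 : |kerApprox f a.1 a.2 p.1 p.2| ≤ M :=
      kerApprox_bound f hfm M hM0 hMf' a.1 a.2 hp.1 hp.2
    have h2 := hMf p
    rw [Real.norm_eq_abs, abs_abs]
    calc |kerApprox f a.1 a.2 p.1 p.2 - f p|
        ≤ |kerApprox f a.1 a.2 p.1 p.2| + |f p| := abs_sub _ _
    _ ≤ M + M := add_le_add h1 h2
    _ = 2 * M := by ring
  · -- integrable bound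
    exact (integrableOn_const_iff (C := 2 * M)).2 (Or.inr
      (IsCompact.measure_lt_top (isCompact_Icc.prod isCompact_Icc)))
  · -- a.e. pointwise convergence
    filter_upwards [hνE, hmem] with p hpE hpQ
    obtain ⟨δ, hδ, hloc⟩ := loc_const hG₁cl hG₂cl c₁ c₂ f hf hpE
    set D : ℝ := 2 * M / δ^2 with hDdef
    have hD0 : 0 ≤ D := by positivity
    have hdom : ∀ q ∈ Set.Icc (0:ℝ) 1 ×ˢ Set.Icc (0:ℝ) 1,
        |f q - f p| ≤ D * ((q.1 - p.1)^2 + (q.2 - p.2)^2) := by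
      intro q _
      by_cases hlt : (q.1 - p.1)^2 + (q.2 - p.2)^2 < δ^2
      · have hd1 : |q.1 - p.1| < δ := by
          apply abs_lt_of_sq_lt_sq _ hδ.le
          nlinarith [sq_nonneg (q.2 - p.2)]
        have hd2 : |q.2 - p.2| < δ := by
          apply abs_lt_of_sq_lt_sq _ hδ.le
          nlinarith [sq_nonneg (q.1 - p.1)]
        have hdist : dist q p < δ := by
          rw [Prod.dist_eq, Real.dist_eq, Real.dist_eq]
          exact max_lt hd1 hd2
        rw [hloc q hdist, sub_self, abs_zero]
        positivity
      · push_neg at hlt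
        have hrhs : 2 * M ≤ D * ((q.1 - p.1)^2 + (q.2 - p.2)^2) := by
          have : D * δ^2 ≤ D * ((q.1 - p.1)^2 + (q.2 - p.2)^2) :=
            mul_le_mul_of_nonneg_left hlt hD0
          have hδ2 : δ^2 ≠ 0 := by positivity
          calc 2 * M = D * δ^2 := by rw [hDdef]; field_simp
          _ ≤ _ := this
        calc |f q - f p| ≤ |f q| + |f p| := abs_sub _ _
        _ ≤ M + M := add_le_add (hMf q) (hMf p)
        _ = 2 * M := by ring
        _ ≤ _ := hrhs
    have hest : ∀ a : ℕ × ℕ, |kerApprox f a.1 a.2 p.1 p.2 - f p|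
        ≤ D * (2/(a.1+1)) + D * (2/(a.2+1)) := by
      intro a
      have := kerApprox_est f hfm M hMf' a.1 a.2 hpQ.1 hpQ.2 (hMf p) hD0 ?_
      · convert this using 2
      · intro q hq
        simpa using hdom q hq
    -- squeeze
    have hfst : Tendsto (Prod.fst : ℕ × ℕ → ℕ) atTop atTop := by
      rw [← Filter.prod_atTop_atTop_eq]; exact tendsto_fst
    have hsnd : Tendsto (Prod.snd : ℕ × ℕ → ℕ) atTop atTop := by
      rw [← Filter.prod_atTop_atTop_eq]; exact tendsto_snd
    have t1 : Tendsto (fun n : ℕ => 2/((n:ℝ)+1)) atTop (nhds 0) := by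
      have := tendsto_one_div_add_atTop_nhds_zero_nat (𝕜 := ℝ)
      have h2 := this.const_mul (2:ℝ)
      simpa [mul_one_div, div_eq_mul_inv] using h2
    have tt : Tendsto (fun a : ℕ × ℕ => D * (2/((a.1:ℝ)+1)) + D * (2/((a.2:ℝ)+1)))
        atTop (nhds 0) := by
      have ha := (t1.comp hfst).const_mul D
      have hb := (t1.comp hsnd).const_mul D
      have := ha.add hb
      simpa using this
    refine squeeze_zero (fun a => abs_nonneg _) hest tt
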